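/- For integers α ≥ 1, β ≥ 1, r with 1 ≤ r ≤ min(α,β), and j ≥ 0, the number of ways to arrange a sequence of rallies in a side-out game starting with server A, ending with A scoring, with α points for A, β points for B, exactly r A-interruptions and j exchanges, equals C(α+β+j-1, j) · C(α, r) · C(β-1, r-1). Consequently, the probability of this event equals C(α+β+j-1, j) · C(α, r) · C(β-1, r-1) · p_a^α · p_b^β · q^{r+j}, where q = (1-p_a)(1-p_b). -/

import Mathlib

open scoped BigOperators
open Filter

/-- Side-out scoring: a trajectory is the list of rally outcomes, `true` meaning that the
current server wins the rally.  `soScorers srv g` is the list of scorers (`true` = player A),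
where `srv` is the current server. -/
def soScorers : Bool → List Bool → List Bool
  | _, [] => []
  | srv, s :: rest => (if s then [srv] else []) ++ soScorers (if s then srv else !srv) rest

/-- Probability weight of a trajectory of rally outcomes: the server wins a rally with
probability `pa` (if A serves) or `pb` (if B serves); rallies are independent. -/
def soWeight (pa pb : ℝ) : Bool → List Bool → ℝ
  | _, [] => 1
  | srv, s :: rest =>
      (if srv then (if s then pa else 1 - pa) else (if s then pb else 1 - pb)) *
        soWeight pa pb (if s then srv else !srv) rest

/-- Points scored by player A (first server A). -/
def soScoreA (g : List Bool) : ℕ := (soScorers true g).count true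

/-- Points scored by player B (first server A). -/
def soScoreB (g : List Bool) : ℕ := (soScorers true g).count false

/-- The trajectory ends with a rally in which A scores a point. -/
def soLastA (g : List Bool) : Prop :=
  g.getLast? = some true ∧ (soScorers true g).getLast? = some true

/-- The trajectory ends with a rally in which B scores a point. -/
def soLastB (g : List Bool) : Prop :=
  g.getLast? = some true ∧ (soScorers true g).getLast? = some false

/-- Number of maximal runs of `false` in a list, the first argument being the previous value. -/
def falseRuns : Bool → List Bool → ℕ
  | _, [] => 0
  | prev, b :: rest => (if prev && !b then 1 else 0) + falseRuns b rest

/-- Number of A-interruptions: maximal stretches in which B gains the serve from A and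
scores at least one point, i.e. maximal blocks of points scored by B. -/
def soInter (g : List Bool) : ℕ := falseRuns true (soScorers true g)

/-- Number of exchanges: pairs of consecutive rallies in which a player gains the right to
serve and immediately loses it without scoring. -/
def exchCount : List Bool → ℕ
  | [] => 0
  | true :: rest => exchCount rest
  | [false] => 0
  | false :: true :: rest => exchCount rest
  | false :: false :: rest => 1 + exchCount rest

/-- Probability of a set of trajectories in the side-out model, first server A. -/
noncomputable def soPr (pa pb : ℝ) (E : Set (List Bool)) : ℝ :=
  ∑' g : List Bool, Set.indicator E (soWeight pa pb true) g

/-- Conditional expectation of `f` given the event `E` in the side-out model, first server A. -/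
noncomputable def soCondExp (pa pb : ℝ) (E : Set (List Bool)) (f : List Bool → ℝ) : ℝ :=
  (∑' g : List Bool, Set.indicator E (fun g => soWeight pa pb true g * f g) g) / soPr pa pb E

-- auxiliary defs
def scorerList : Bool → List Bool → List Bool
  | _, [] => []
  | srv, x :: cs => (if x then srv else !srv) :: scorerList (if x then srv else !srv) cs

def padFF : ℕ → List Bool → List Bool
  | 0, l => l
  | k+1, l => false :: false :: padFF k l

def buildG : List Bool → List ℕ → List Bool
  | c :: cs, k :: es => padFF k ((if c then [true] else [false, true]) ++ buildG cs es)
  | _, _ => []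

def parseG : List Bool → List Bool × List ℕ
  | true :: g => ((true :: (parseG g).1), (0 :: (parseG g).2))
  | false :: true :: g => ((false :: (parseG g).1), (0 :: (parseG g).2))
  | false :: false :: g =>
      match parseG g with
      | (c, k :: es) => (c, (k+1) :: es)
      | (c, []) => (c, [1])
  | _ => ([], [])

def trueRuns : Bool → List Bool → ℕ
  | _, [] => 0
  | prev, b :: rest => (if !prev && b then 1 else 0) + trueRuns b rest

def coreWeight (pa pb : ℝ) : Bool → List Bool → ℝ
  | _, [] => 1
  | srv, x :: cs =>
      (if x then (if srv then pa else pb) else (if srv then (1-pa)*pb else (1-pb)*pa)) *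
        coreWeight pa pb (if x then srv else !srv) cs

-- padFF lemmas
lemma soScorers_false (srv : Bool) (l : List Bool) :
    soScorers srv (false :: l) = soScorers (!srv) l := by simp [soScorers]

lemma soScorers_true (srv : Bool) (l : List Bool) :
    soScorers srv (true :: l) = srv :: soScorers srv l := by simp [soScorers]

lemma soScorers_padFF (k : ℕ) (srv : Bool) (l : List Bool) :
    soScorers srv (padFF k l) = soScorers srv l := by
  induction k with
  | zero => rfl
  | succ k ih => simp [padFF, soScorers_false, ih]

lemma exchCount_padFF (k : ℕ) (l : List Bool) :
    exchCount (padFF k l) = k + exchCount l := by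
  induction k with
  | zero => simp [padFF]
  | succ k ih => simp [padFF, exchCount, ih]; omega

lemma soWeight_false_cons (pa pb : ℝ) (srv : Bool) (l : List Bool) :
    soWeight pa pb srv (false :: l) =
      (if srv then 1-pa else 1-pb) * soWeight pa pb (!srv) l := by
  cases srv <;> simp [soWeight]

lemma soWeight_padFF (pa pb : ℝ) (k : ℕ) (srv : Bool) (l : List Bool) :
    soWeight pa pb srv (padFF k l) = ((1-pa)*(1-pb))^k * soWeight pa pb srv l := by
  induction k with
  | zero => simp [padFF]
  | succ k ih =>
    simp only [padFF]
    rw [soWeight_false_cons, soWeight_false_cons, Bool.not_not, ih]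
    cases srv <;> simp <;> ring

lemma getLast?_padFF (k : ℕ) (l : List Bool) (h : l ≠ []) :
    (padFF k l).getLast? = l.getLast? := by
  induction k with
  | zero => rfl
  | succ k ih =>
    have h2 : padFF k l ≠ [] := by
      cases k with
      | zero => exact h
      | succ k => simp [padFF]
    simp only [padFF]
    rw [List.getLast?_cons_cons]
    cases hk : padFF k l with
    | nil => exact absurd hk h2
    | cons y t => rw [← hk, ← ih]; rw [hk, List.getLast?_cons_cons]

lemma soWeight_true_cons (pa pb : ℝ) (srv : Bool) (l : List Bool) :
    soWeight pa pb srv (true :: l) =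
      (if srv then pa else pb) * soWeight pa pb srv l := by
  cases srv <;> simp [soWeight]

lemma buildG_ne_nil (c : Bool) (cs : List Bool) (k : ℕ) (es : List ℕ) :
    buildG (c :: cs) (k :: es) ≠ [] := by
  simp only [buildG]
  cases k with
  | zero => cases c <;> simp [padFF]
  | succ k => simp [padFF]

lemma soScorers_buildG : ∀ (c : List Bool) (e : List ℕ) (srv : Bool),
    c.length = e.length → soScorers srv (buildG c e) = scorerList srv c
  | [], [], srv, _ => by simp [buildG, soScorers, scorerList]
  | x :: cs, k :: es, srv, h => by
    have ih := soScorers_buildG cs es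
    simp only [buildG, soScorers_padFF]
    cases x <;>
      simp [soScorers_true, soScorers_false, scorerList, ih _ (by simpa using h)]
  | [], _ :: _, _, h => by simp at h
  | _ :: _, [], _, h => by simp at h

lemma exchCount_buildG : ∀ (c : List Bool) (e : List ℕ),
    c.length = e.length → exchCount (buildG c e) = e.sum
  | [], [], _ => by simp [buildG, exchCount]
  | x :: cs, k :: es, h => by
    have ih := exchCount_buildG cs es (by simpa using h)
    simp only [buildG, exchCount_padFF]
    cases x <;> simp [exchCount, ih, List.sum_cons] <;> omega
  | [], _ :: _, h => by simp at h
  | _ :: _, [], h => by simp at h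

lemma soWeight_buildG (pa pb : ℝ) : ∀ (c : List Bool) (e : List ℕ) (srv : Bool),
    c.length = e.length →
    soWeight pa pb srv (buildG c e) = ((1-pa)*(1-pb))^e.sum * coreWeight pa pb srv c
  | [], [], srv, _ => by simp [buildG, soWeight, coreWeight]
  | x :: cs, k :: es, srv, h => by
    have ih := fun srv => soWeight_buildG pa pb cs es srv (by simpa using h)
    cases x <;> cases srv <;>
      simp only [buildG, soWeight_padFF, List.cons_append, List.nil_append, if_true, if_false,
        Bool.false_eq_true, Bool.not_true, Bool.not_false, ite_true, ite_false,
        soWeight_false_cons, soWeight_true_cons, ih, coreWeight, List.sum_cons, pow_add] <;>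
      ring

lemma getLast?_buildG : ∀ (c : List Bool) (e : List ℕ), c.length = e.length → c ≠ [] →
    (buildG c e).getLast? = some true
  | [], _, _, hc => absurd rfl hc
  | x :: cs, k :: es, h, _ => by
    have hlen : cs.length = es.length := by simpa using h
    simp only [buildG]
    rw [getLast?_padFF _ _ (by cases x <;> simp)]
    cases cs with
    | nil =>
      have : es = [] := by simpa using hlen.symm
      subst this
      cases x <;> simp [buildG]
    | cons c' cs' =>
      cases es with
      | nil => simp at hlen
      | cons k' es' =>
        rw [List.getLast?_append,
          getLast?_buildG (c' :: cs') (k' :: es') hlen (by simp)]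
        rfl
  | _ :: _, [], h, _ => by simp at h

lemma buildG_succ (x : Bool) (cs : List Bool) (k : ℕ) (es : List ℕ) :
    buildG (x :: cs) ((k+1) :: es) = false :: false :: buildG (x :: cs) (k :: es) := rfl

lemma parseG_buildG : ∀ (c : List Bool) (e : List ℕ), c.length = e.length →
    parseG (buildG c e) = (c, e)
  | [], [], _ => by simp [buildG, parseG]
  | x :: cs, 0 :: es, h => by
    have ih := parseG_buildG cs es (by simpa using h)
    cases x <;> simp [buildG, padFF, parseG, ih]
  | x :: cs, (k+1) :: es, h => by
    have ih := parseG_buildG (x :: cs) (k :: es) (by simpa using h)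
    rw [buildG_succ]
    simp [parseG, ih]
  | [], _ :: _, h => by simp at h
  | _ :: _, [], h => by simp at h
termination_by c e => (e.sum, c.length)
decreasing_by all_goals simp_wf <;> omega

lemma getLast?_cons_ne_nil (x : Bool) (l : List Bool) (h : l ≠ []) :
    (x :: l).getLast? = l.getLast? := by
  cases l with
  | nil => exact absurd rfl h
  | cons y t => exact List.getLast?_cons_cons

lemma ne_nil_of_getLast? {l : List Bool} (h : l.getLast? = some true) : l ≠ [] := by
  intro h'; subst h'; simp at h

lemma buildG_parseG : ∀ g : List Bool, g.getLast? = some true →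
    buildG (parseG g).1 (parseG g).2 = g ∧ (parseG g).1.length = (parseG g).2.length := by
  intro g
  induction g using parseG.induct with
  | case1 g ih =>
    intro hg
    cases g with
    | nil => simp [parseG, buildG, padFF]
    | cons y t =>
      rw [getLast?_cons_ne_nil _ _ (by simp)] at hg
      obtain ⟨h1, h2⟩ := ih hg
      simp only [parseG]
      constructor
      · show true :: buildG _ _ = _
        rw [h1]
      · simpa using h2
  | case2 g ih =>
    intro hg
    cases g with
    | nil => simp [parseG, buildG, padFF]
    | cons y t =>
      rw [getLast?_cons_ne_nil _ _ (by simp), getLast?_cons_ne_nil _ _ (by simp)] at hg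
      obtain ⟨h1, h2⟩ := ih hg
      simp only [parseG]
      constructor
      · show buildG (false :: _) (0 :: _) = _
        rw [show buildG (false :: (parseG (y :: t)).1) (0 :: (parseG (y :: t)).2)
            = false :: true :: buildG (parseG (y :: t)).1 (parseG (y :: t)).2 from rfl, h1]
      · simpa using h2
  | case3 g c k es hp ih =>
    intro hg
    have hgne : g ≠ [] := by
      intro h'; subst h'; simp [parseG] at hp
    rw [getLast?_cons_ne_nil _ _ (by simp), getLast?_cons_ne_nil _ _ hgne] at hg
    obtain ⟨h1, h2⟩ := ih hg
    rw [hp] at h1 h2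
    have hcne : c ≠ [] := by
      intro h'; subst h'; simp at h2
    cases c with
    | nil => exact absurd rfl hcne
    | cons x cs =>
      simp only [parseG, hp]
      constructor
      · show buildG (x :: cs) ((k+1) :: es) = _
        rw [buildG_succ, h1]
      · simpa using h2
  | case4 g c hp ih =>
    intro hg
    have hgne : g ≠ [] := by
      intro h'; subst h'; simp [List.getLast?] at hg
    rw [getLast?_cons_ne_nil _ _ (by simp), getLast?_cons_ne_nil _ _ hgne] at hg
    obtain ⟨h1, h2⟩ := ih hg
    rw [hp] at h1 h2
    have : c = [] := by simpa using h2
    subst this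
    exact absurd (by simpa [buildG] using h1.symm) hgne
  | case5 g h1 h2 h3 =>
    intro hg
    match g, h1, h2, h3 with
    | [], _, _, _ => simp at hg
    | [false], _, _, _ => simp [List.getLast?] at hg
    | true :: g', h1, _, _ => exact (h1 g' rfl).elim
    | false :: true :: g', _, h2, _ => exact (h2 g' rfl).elim
    | false :: false :: g', _, _, h3 => exact (h3 g' rfl).elim

lemma scorerList_length : ∀ (srv : Bool) (c : List Bool),
    (scorerList srv c).length = c.length
  | _, [] => rfl
  | srv, x :: cs => by simp [scorerList, scorerList_length _ cs]

def unscorer : Bool → List Bool → List Bool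
  | _, [] => []
  | p, x :: xs => (x == p) :: unscorer x xs

lemma scorerList_unscorer : ∀ (p : Bool) (w : List Bool),
    scorerList p (unscorer p w) = w
  | _, [] => rfl
  | p, x :: xs => by
    have := scorerList_unscorer x xs
    cases p <;> cases x <;> simpa [unscorer, scorerList]

lemma unscorer_scorerList : ∀ (p : Bool) (c : List Bool),
    unscorer p (scorerList p c) = c
  | _, [] => rfl
  | p, x :: cs => by
    have := unscorer_scorerList (if x then p else !p) cs
    cases p <;> cases x <;> simpa [unscorer, scorerList]

lemma coreWeight_eq (pa pb : ℝ) : ∀ (c : List Bool) (srv : Bool),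
    coreWeight pa pb srv c =
      pa ^ ((scorerList srv c).count true) * pb ^ ((scorerList srv c).count false) *
      (1-pa) ^ (falseRuns srv (scorerList srv c)) * (1-pb) ^ (trueRuns srv (scorerList srv c))
  | [], srv => by simp [coreWeight, scorerList, falseRuns, trueRuns]
  | x :: cs, srv => by
    have ih := fun s => coreWeight_eq pa pb cs s
    cases x <;> cases srv <;>
      simp [coreWeight, scorerList, falseRuns, trueRuns, ih, pow_succ] <;> ring

lemma trueRuns_eq_falseRuns : ∀ (w : List Bool) (p : Bool), w.getLast? = some true →
    trueRuns p w + (if p then 1 else 0) = falseRuns p w + 1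
  | [], _, h => by simp at h
  | [x], p, h => by
    simp [List.getLast?] at h
    subst h
    cases p <;> simp [trueRuns, falseRuns]
  | x :: y :: xs, p, h => by
    rw [getLast?_cons_ne_nil _ _ (by simp)] at h
    have ih := trueRuns_eq_falseRuns (y :: xs) x h
    cases p <;> cases x <;>
      simp only [trueRuns, falseRuns, Bool.not_true, Bool.not_false, Bool.true_and,
        Bool.false_and, Bool.and_true, Bool.and_false, if_true, if_false] at ih ⊢ <;>
      omega

lemma eset_count (j n : ℕ) : ({e : List ℕ | e.length = n ∧ e.sum = j}).Finite ∧
    ({e : List ℕ | e.length = n ∧ e.sum = j}).ncard = (n + j - 1).choose j := by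
  induction j generalizing n with
  | zero =>
    have hset : {e : List ℕ | e.length = n ∧ e.sum = 0} = {List.replicate n 0} := by
      ext e
      simp only [Set.mem_setOf_eq, Set.mem_singleton_iff]
      constructor
      · rintro ⟨h1, h2⟩
        exact List.eq_replicate_iff.2 ⟨h1, fun b hb => List.sum_eq_zero_iff.1 h2 b hb⟩
      · rintro rfl; simp [List.sum_eq_zero_iff]
    rw [hset]
    exact ⟨Set.finite_singleton _, by simp⟩
  | succ j ihj =>
    induction n with
    | zero =>
      have hset : {e : List ℕ | e.length = 0 ∧ e.sum = j + 1} = ∅ := by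
        ext e
        simp only [Set.mem_setOf_eq, Set.mem_empty_iff_false, iff_false]
        rintro ⟨h1, h2⟩
        rw [List.length_eq_zero_iff] at h1
        subst h1
        simp at h2
      rw [hset]
      refine ⟨Set.finite_empty, ?_⟩
      rw [Set.ncard_empty]
      have : 0 + (j + 1) - 1 = j := by omega
      rw [this]
      exact (Nat.choose_eq_zero_of_lt (Nat.lt_succ_self j)).symm
    | succ n ihn =>
      obtain ⟨hf1, hc1⟩ := ihn
      obtain ⟨hf2, hc2⟩ := ihj (n + 1)
      have hdec : {e : List ℕ | e.length = n + 1 ∧ e.sum = j + 1} =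
          (List.cons 0) '' {e : List ℕ | e.length = n ∧ e.sum = j + 1} ∪
          (fun e => (e.headI + 1) :: e.tail) '' {e : List ℕ | e.length = n + 1 ∧ e.sum = j} := by
        ext e
        simp only [Set.mem_setOf_eq, Set.mem_union, Set.mem_image]
        constructor
        · rintro ⟨h1, h2⟩
          cases e with
          | nil => simp at h1
          | cons k es =>
            cases k with
            | zero =>
              exact Or.inl ⟨es, ⟨by simpa using h1, by simpa using h2⟩, rfl⟩
            | succ k' =>
              refine Or.inr ⟨k' :: es, ⟨by simpa using h1, ?_⟩, rfl⟩
              simp only [List.sum_cons] at h2 ⊢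
              omega
        · rintro (⟨es, ⟨h1, h2⟩, rfl⟩ | ⟨es, ⟨h1, h2⟩, rfl⟩)
          · exact ⟨by simpa using h1, by simpa using h2⟩
          · cases es with
            | nil => simp at h1
            | cons k t =>
              refine ⟨by simpa using h1, ?_⟩
              simp only [List.sum_cons, List.headI, List.tail] at h2 ⊢
              omega
      have hinj1 : Set.InjOn (List.cons 0) {e : List ℕ | e.length = n ∧ e.sum = j + 1} :=
        fun a _ b _ h => by simpa using h
      have hinj2 : Set.InjOn (fun e => (e.headI + 1) :: e.tail)
          {e : List ℕ | e.length = n + 1 ∧ e.sum = j} := by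
        rintro a ⟨ha, _⟩ b ⟨hb, _⟩ h
        cases a with
        | nil => simp at ha
        | cons x xs =>
          cases b with
          | nil => simp at hb
          | cons y ys => simpa using h
      have hdisj : Disjoint ((List.cons 0) '' {e : List ℕ | e.length = n ∧ e.sum = j + 1})
          ((fun e => (e.headI + 1) :: e.tail) '' {e : List ℕ | e.length = n + 1 ∧ e.sum = j}) := by
        rw [Set.disjoint_left]
        rintro a ⟨es, _, rfl⟩ ⟨es', _, heq⟩
        simp at heq
      refine ⟨by rw [hdec]; exact (hf1.image _).union (hf2.image _), ?_⟩
      rw [hdec, Set.ncard_union_eq hdisj (hf1.image _) (hf2.image _),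
        Set.ncard_image_of_injOn hinj1, Set.ncard_image_of_injOn hinj2, hc1, hc2]
      have e1 : n + (j + 1) - 1 = n + j := by omega
      have e2 : n + 1 + j - 1 = n + j := by omega
      have e3 : n + 1 + (j + 1) - 1 = n + j + 1 := by omega
      rw [e1, e2, e3, Nat.choose_succ_succ (n + j) j, Nat.succ_eq_add_one]
      omega

def Wset (p : Bool) (a b r : ℕ) : Set (List Bool) :=
  {w | w.count true = a ∧ w.count false = b ∧ w.getLast? = some true ∧ falseRuns p w = r}

def Mform (p : Bool) (a b r : ℕ) : ℕ :=
  if a = 0 then 0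
  else if p then
    (if b = 0 then (if r = 0 then 1 else 0)
     else if r = 0 then 0 else a.choose r * (b-1).choose (r-1))
  else (a-1).choose r * b.choose r

lemma count_true_add_count_false : ∀ w : List Bool, w.count true + w.count false = w.length
  | [] => rfl
  | x :: xs => by
    have := count_true_add_count_false xs
    cases x <;> simp [List.count_cons] <;> omega

lemma falseRuns_replicate_true (p : Bool) : ∀ a : ℕ, falseRuns p (List.replicate a true) = 0
  | 0 => rfl
  | a + 1 => by
    simp only [List.replicate_succ, falseRuns, falseRuns_replicate_true true a]
    cases p <;> simp

lemma getLast?_replicate_true : ∀ a : ℕ, 1 ≤ a → (List.replicate a true).getLast? = some true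
  | 1, _ => rfl
  | a + 2, _ => by
    rw [List.replicate_succ, getLast?_cons_ne_nil _ _ (by simp)]
    exact getLast?_replicate_true (a+1) (by omega)

lemma eq_replicate_of_count_false_eq_zero {w : List Bool} (h : w.count false = 0) :
    w = List.replicate w.length true := by
  refine List.eq_replicate_iff.2 ⟨rfl, fun b hb => ?_⟩
  cases b
  · exact absurd (List.count_pos_iff.2 hb) (by omega)
  · rfl

lemma wset_a_zero (p : Bool) (b r : ℕ) : Wset p 0 b r = ∅ := by
  ext w
  simp only [Wset, Set.mem_setOf_eq, Set.mem_empty_iff_false, iff_false]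
  rintro ⟨h1, _, h3, _⟩
  have : true ∈ w := List.mem_of_getLast? h3
  have := List.count_pos_iff.2 this
  omega

lemma wset_b_zero (p : Bool) (a r : ℕ) (ha : 1 ≤ a) :
    Wset p a 0 r = if r = 0 then {List.replicate a true} else ∅ := by
  ext w
  simp only [Wset, Set.mem_setOf_eq]
  constructor
  · rintro ⟨h1, h2, h3, h4⟩
    have hw : w = List.replicate a true := by
      have := eq_replicate_of_count_false_eq_zero h2
      have hl : w.length = a := by have := count_true_add_count_false w; omega
      rwa [hl] at this
    subst hw
    rw [falseRuns_replicate_true] at h4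
    simp [← h4]
  · intro hw
    by_cases hr : r = 0
    · subst hr
      rw [if_pos rfl, Set.mem_singleton_iff] at hw
      subst hw
      refine ⟨by simp, by rw [List.count_replicate]; simp, getLast?_replicate_true a ha,
        falseRuns_replicate_true _ _⟩
    · simp [hr] at hw

lemma wset_head (p : Bool) {a b r : ℕ} (ha : 1 ≤ a) (hb : 1 ≤ b) {w : List Bool}
    (hw : w ∈ Wset p a b r) :
    ∃ x xs, w = x :: xs ∧ xs.getLast? = some true ∧
      ((x = true ∧ xs ∈ Wset true (a-1) b r) ∨
       (x = false ∧ xs.count true = a ∧ xs.count false = b - 1 ∧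
          xs.getLast? = some true ∧ (if p then 1 else 0) + falseRuns false xs = r)) := by
  obtain ⟨h1, h2, h3, h4⟩ := hw
  cases w with
  | nil => simp at h3
  | cons x xs =>
    have hxs : xs ≠ [] := by
      rintro rfl
      cases x <;> simp_all [List.count_cons] <;> omega
    rw [getLast?_cons_ne_nil _ _ hxs] at h3
    refine ⟨x, xs, rfl, h3, ?_⟩
    cases x
    · refine Or.inr ⟨rfl, ?_, ?_, h3, ?_⟩
      · simpa [List.count_cons] using h1
      · simp [List.count_cons] at h2; omega
      · simpa [falseRuns] using h4
    · refine Or.inl ⟨rfl, ?_, ?_, h3, ?_⟩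
      · simp [List.count_cons] at h1; omega
      · simpa [List.count_cons] using h2
      · simpa [falseRuns] using h4

lemma wset_decomp0 (a b : ℕ) (ha : 1 ≤ a) (hb : 1 ≤ b) :
    Wset true a b 0 = (true :: ·) '' Wset true (a-1) b 0 := by
  ext w
  constructor
  · intro hw
    obtain ⟨x, xs, rfl, hlast, hcase | hcase⟩ := wset_head true ha hb hw
    · exact ⟨xs, hcase.2, by rw [hcase.1]⟩
    · exfalso; obtain ⟨_, _, _, _, h5⟩ := hcase; simp at h5
  · rintro ⟨xs, ⟨h1, h2, h3, h4⟩, rfl⟩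
    refine ⟨by simp [List.count_cons]; omega, by simpa [List.count_cons] using h2,
      by rw [getLast?_cons_ne_nil _ _ (ne_nil_of_getLast? h3)]; exact h3,
      by simpa [falseRuns] using h4⟩

lemma wset_decomp (p : Bool) (a b r : ℕ) (ha : 1 ≤ a) (hb : 1 ≤ b)
    (hpr : p = true → 1 ≤ r) :
    Wset p a b r = (true :: ·) '' Wset true (a-1) b r ∪
      (false :: ·) '' Wset false a (b-1) (r - if p then 1 else 0) := by
  ext w
  constructor
  · intro hw
    obtain ⟨x, xs, rfl, hlast, hcase | hcase⟩ := wset_head p ha hb hw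
    · exact Or.inl ⟨xs, hcase.2, by rw [hcase.1]⟩
    · obtain ⟨hx, h1, h2, h3, h4⟩ := hcase
      refine Or.inr ⟨xs, ⟨h1, h2, h3, ?_⟩, by rw [hx]⟩
      cases p <;> simp at h4 ⊢ <;> omega
  · rintro (⟨xs, ⟨h1, h2, h3, h4⟩, rfl⟩ | ⟨xs, ⟨h1, h2, h3, h4⟩, rfl⟩)
    · refine ⟨by simp [List.count_cons]; omega, by simpa [List.count_cons] using h2,
        by rw [getLast?_cons_ne_nil _ _ (ne_nil_of_getLast? h3)]; exact h3,
        by simpa [falseRuns] using h4⟩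
    · refine ⟨by simpa [List.count_cons] using h1, by simp [List.count_cons]; omega,
        by rw [getLast?_cons_ne_nil _ _ (ne_nil_of_getLast? h3)]; exact h3, ?_⟩
      cases p with
      | true => have := hpr rfl; simp [falseRuns] at h4 ⊢; omega
      | false => simpa [falseRuns] using h4

lemma mform_i (a b : ℕ) (ha : 1 ≤ a) (hb : 1 ≤ b) :
    Mform true a b 0 = Mform true (a-1) b 0 := by
  have hb0 : b ≠ 0 := by omega
  simp [Mform, hb0]

lemma mform_ii (a b r' : ℕ) (ha : 1 ≤ a) (hb : 1 ≤ b) :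
    Mform true a b (r'+1) = Mform true (a-1) b (r'+1) + Mform false a (b-1) r' := by
  have hb0 : b ≠ 0 := by omega
  cases a with
  | zero => omega
  | succ a =>
    cases a with
    | zero =>
      simp [Mform, hb0]
      cases r' <;> simp [Nat.choose]
    | succ a =>
      simp [Mform, hb0, Nat.choose_succ_succ (a+1) r']
      ring

lemma mform_iii (a b r : ℕ) (ha : 1 ≤ a) (hb : 1 ≤ b) :
    Mform false a b r = Mform true (a-1) b r + Mform false a (b-1) r := by
  have hb0 : b ≠ 0 := by omega
  cases a with
  | zero => omega
  | succ a =>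
    cases a with
    | zero =>
      cases r <;> simp [Mform, hb0, Nat.choose]
    | succ a =>
      cases r with
      | zero => simp [Mform, hb0]
      | succ r =>
        cases b with
        | zero => omega
        | succ b =>
          simp [Mform, Nat.choose_succ_succ b r]
          ring

lemma cons_injOn (x : Bool) (s : Set (List Bool)) : Set.InjOn (x :: ·) s :=
  fun a _ b _ h => by simpa using h

lemma cons_disjoint (s t : Set (List Bool)) :
    Disjoint ((true :: ·) '' s) ((false :: ·) '' t) := by
  rw [Set.disjoint_left]
  rintro a ⟨u, _, rfl⟩ ⟨v, _, heq⟩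
  simp at heq

lemma wset_count : ∀ (n : ℕ) (p : Bool) (a b r : ℕ), a + b = n →
    (Wset p a b r).Finite ∧ (Wset p a b r).ncard = Mform p a b r := by
  intro n
  induction n using Nat.strong_induction_on with
  | _ n IH =>
    intro p a b r hn
    by_cases ha : a = 0
    · subst ha
      rw [wset_a_zero]
      exact ⟨Set.finite_empty, by simp [Mform]⟩
    by_cases hb : b = 0
    · subst hb
      rw [wset_b_zero p a r (by omega)]
      by_cases hr : r = 0
      · subst hr
        refine ⟨by simp, ?_⟩
        rw [if_pos rfl, Set.ncard_singleton]
        cases p <;> simp [Mform, ha, Nat.choose]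
      · rw [if_neg hr]
        refine ⟨Set.finite_empty, ?_⟩
        rw [Set.ncard_empty]
        cases p
        · have h0 : Nat.choose 0 r = 0 := Nat.choose_eq_zero_of_lt (by omega)
          simp [Mform, ha, hr, h0]
        · simp [Mform, ha, hr]
    -- main case : 1 ≤ a, 1 ≤ b
    have ha1 : 1 ≤ a := by omega
    have hb1 : 1 ≤ b := by omega
    obtain ⟨hf1, hc1⟩ := IH (n-1) (by omega) true (a-1) b r (by omega)
    have hlt : n - 1 < n := by omega
    have heq2 : a + (b - 1) = n - 1 := by omega
    obtain ⟨hf2, hc2⟩ := IH (n-1) hlt false a (b-1) (r - if p then 1 else 0) heq2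
    by_cases hp0 : p = true ∧ r = 0
    · obtain ⟨hp, hr⟩ := hp0
      subst hp; subst hr
      rw [wset_decomp0 a b ha1 hb1]
      refine ⟨hf1.image _, ?_⟩
      rw [Set.ncard_image_of_injOn (cons_injOn _ _), hc1, mform_i a b ha1 hb1]
    · have hpr : p = true → 1 ≤ r := by
        intro hp
        rcases Nat.eq_zero_or_pos r with hr | hr
        · exact absurd ⟨hp, hr⟩ hp0
        · exact hr
      rw [wset_decomp p a b r ha1 hb1 hpr]
      refine ⟨(hf1.image _).union (hf2.image _), ?_⟩
      rw [Set.ncard_union_eq (cons_disjoint _ _) (hf1.image _) (hf2.image _),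
        Set.ncard_image_of_injOn (cons_injOn _ _), Set.ncard_image_of_injOn (cons_injOn _ _),
        hc1, hc2]
      cases p with
      | false => exact (mform_iii a b r ha1 hb1).symm
      | true =>
        have hr1 : 1 ≤ r := hpr rfl
        cases r with
        | zero => omega
        | succ r' =>
          simp only [if_pos rfl, Nat.add_sub_cancel]
          exact (mform_ii a b r' ha1 hb1).symm

theorem stmt_0 (α β r j : ℕ) (hα : 1 ≤ α) (hβ : 1 ≤ β) (hr1 : 1 ≤ r) (hr2 : r ≤ min α β)
    (pa pb : ℝ) (hpa0 : 0 ≤ pa) (hpa1 : pa ≤ 1) (hpb0 : 0 ≤ pb) (hpb1 : pb ≤ 1) :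
    ({g : List Bool | soScoreA g = α ∧ soScoreB g = β ∧ soLastA g ∧
        soInter g = r ∧ exchCount g = j}).ncard =
      (α + β + j - 1).choose j * α.choose r * (β - 1).choose (r - 1) ∧
    soPr pa pb {g : List Bool | soScoreA g = α ∧ soScoreB g = β ∧ soLastA g ∧
        soInter g = r ∧ exchCount g = j} =
      ((α + β + j - 1).choose j : ℝ) * (α.choose r : ℝ) * ((β - 1).choose (r - 1) : ℝ) *
        pa ^ α * pb ^ β * ((1 - pa) * (1 - pb)) ^ (r + j) := by
  set E : Set (List Bool) := {g : List Bool | soScoreA g = α ∧ soScoreB g = β ∧ soLastA g ∧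
      soInter g = r ∧ exchCount g = j} with hE
  set W : Set (List Bool) := Wset true α β r with hWdef
  set Cs : Set (List Bool) := {c : List Bool | scorerList true c ∈ W} with hCs
  set Es : Set (List ℕ) := {e : List ℕ | e.length = α + β ∧ e.sum = j} with hEs
  obtain ⟨hWfin, hWcard⟩ := wset_count (α + β) true α β r rfl
  obtain ⟨hEfin, hEcard⟩ := eset_count j (α + β)
  -- Cs as image of W
  have hCsim : Cs = unscorer true '' W := by
    ext c
    constructor
    · intro hc
      exact ⟨scorerList true c, hc, unscorer_scorerList true c⟩
    · rintro ⟨w, hw, rfl⟩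
      show scorerList true (unscorer true w) ∈ W
      rwa [scorerList_unscorer]
  have hCsfin : Cs.Finite := hCsim ▸ hWfin.image _
  have hCscard : Cs.ncard = α.choose r * (β - 1).choose (r - 1) := by
    rw [hCsim, Set.ncard_image_of_injOn, hWcard]
    · have n1 : ¬ α = 0 := by omega
      have n2 : ¬ β = 0 := by omega
      have n3 : ¬ r = 0 := by omega
      simp only [Mform, if_neg n1, if_true, if_neg n2, if_neg n3]
    · intro u _ v _ h
      have := congrArg (scorerList true) h
      rwa [scorerList_unscorer, scorerList_unscorer] at this
  -- lengths of members
  have hClen : ∀ c ∈ Cs, c.length = α + β := by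
    intro c hc
    obtain ⟨h1, h2, _, _⟩ := hc
    have := count_true_add_count_false (scorerList true c)
    rw [h1, h2, scorerList_length] at this
    omega
  have hCne : ∀ c ∈ Cs, c ≠ [] := by
    intro c hc hnil
    obtain ⟨_, _, h3, _⟩ := hc
    rw [hnil] at h3
    simp [scorerList] at h3
  -- E as image of Cs ×ˢ Es
  have hEim : E = (fun ce : List Bool × List ℕ => buildG ce.1 ce.2) '' (Cs ×ˢ Es) := by
    ext g
    constructor
    · intro hg
      obtain ⟨h1, h2, ⟨h3a, h3b⟩, h4, h5⟩ := hg
      simp only [soScoreA, soScoreB, soInter] at h1 h2 h4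
      obtain ⟨hbp, hlen⟩ := buildG_parseG g h3a
      set c := (parseG g).1
      set e := (parseG g).2
      have hsc : soScorers true g = scorerList true c := by
        rw [← hbp]; exact soScorers_buildG c e true hlen
      refine ⟨(c, e), ⟨?_, ?_, ?_⟩, hbp⟩
      · show scorerList true c ∈ W
        rw [← hsc]
        exact ⟨h1, h2, h3b, h4⟩
      · show e.length = α + β
        rw [← hlen]
        have := count_true_add_count_false (soScorers true g)
        rw [h1, h2, hsc, scorerList_length] at this
        omega
      · show e.sum = j
        rw [← h5, ← hbp]
        exact (exchCount_buildG c e hlen).symm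
    · rintro ⟨⟨c, e⟩, ⟨hc, he⟩, rfl⟩
      have hlen : c.length = e.length := by
        rw [hClen c hc, he.1]
      have hsc : soScorers true (buildG c e) = scorerList true c :=
        soScorers_buildG c e true hlen
      obtain ⟨h1, h2, h3, h4⟩ := hc
      refine ⟨?_, ?_, ⟨?_, ?_⟩, ?_, ?_⟩
      · show (soScorers true _).count true = α
        rw [hsc]; exact h1
      · show (soScorers true _).count false = β
        rw [hsc]; exact h2
      · exact getLast?_buildG c e hlen (hCne c ⟨h1, h2, h3, h4⟩)
      · rw [hsc]; exact h3
      · show falseRuns true (soScorers true _) = r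
        rw [hsc]; exact h4
      · rw [exchCount_buildG c e hlen]; exact he.2
  have hinj : Set.InjOn (fun ce : List Bool × List ℕ => buildG ce.1 ce.2) (Cs ×ˢ Es) := by
    rintro ⟨c, e⟩ ⟨hc, he⟩ ⟨c', e'⟩ ⟨hc', he'⟩ h
    have hlen : c.length = e.length := by rw [hClen c hc, he.1]
    have hlen' : c'.length = e'.length := by rw [hClen c' hc', he'.1]
    have := congrArg parseG h
    rw [parseG_buildG c e hlen, parseG_buildG c' e' hlen'] at this
    exact this
  have hDfin : (Cs ×ˢ Es).Finite := hCsfin.prod hEfin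
  have hEfin2 : E.Finite := hEim ▸ hDfin.image _
  have hprod : (Cs ×ˢ Es).ncard = Cs.ncard * Es.ncard := by
    rw [← Nat.card_coe_set_eq, ← Nat.card_coe_set_eq, ← Nat.card_coe_set_eq,
      Nat.card_congr (Equiv.Set.prod Cs Es), Nat.card_prod]
  have hEcount : E.ncard = (α + β + j - 1).choose j * α.choose r * (β - 1).choose (r - 1) := by
    rw [hEim, Set.ncard_image_of_injOn hinj, hprod, hCscard, hEcard]
    ring
  refine ⟨hEcount, ?_⟩
  -- probability part
  have hweight : ∀ g ∈ E, soWeight pa pb true g =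
      pa ^ α * pb ^ β * ((1 - pa) * (1 - pb)) ^ (r + j) := by
    intro g hg
    obtain ⟨h1, h2, ⟨h3a, h3b⟩, h4, h5⟩ := hg
    simp only [soScoreA, soScoreB, soInter] at h1 h2 h4
    obtain ⟨hbp, hlen⟩ := buildG_parseG g h3a
    set c := (parseG g).1
    set e := (parseG g).2
    have hsc : soScorers true g = scorerList true c := by
      rw [← hbp]; exact soScorers_buildG c e true hlen
    have hsum : e.sum = j := by
      rw [← h5, ← hbp, exchCount_buildG c e hlen]
    have htr : trueRuns true (scorerList true c) = r := by
      have := trueRuns_eq_falseRuns (scorerList true c) true (by rw [← hsc]; exact h3b)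
      rw [← hsc] at *
      simp at this
      omega
    rw [← hbp, soWeight_buildG pa pb c e true hlen, coreWeight_eq pa pb c true, ← hsc, h1, h2,
      hsum]
    rw [hsc] at h4 ⊢
    rw [h4, htr, pow_add, mul_pow, mul_pow]
    ring
  rw [soPr, tsum_eq_sum (s := hEfin2.toFinset)
    (fun g hg => Set.indicator_of_notMem (by simpa using hg) _)]
  have : ∀ g ∈ hEfin2.toFinset, Set.indicator E (soWeight pa pb true) g =
      pa ^ α * pb ^ β * ((1 - pa) * (1 - pb)) ^ (r + j) := by
    intro g hg
    rw [Set.Finite.mem_toFinset] at hg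
    rw [Set.indicator_of_mem hg, hweight g hg]
  rw [Finset.sum_congr rfl this, Finset.sum_const, nsmul_eq_mul]
  have hcard : hEfin2.toFinset.card = E.ncard := (Set.ncard_eq_toFinset_card E hEfin2).symm
  rw [hcard, hEcount]
  push_cast
  ring
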